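/- Let G = (V, E) be a finite DAG in which every vertex has degree at most Δ, and let S, S' ⊆ V be disjoint. If there exists a set C ⊆ V \ (S ∪ S') with S ⊥d S' | C, then there exists such a set C' ⊆ V \ (S ∪ S') with S ⊥d S' | C' and |C'| ≤ min(|S|, |S'|) · Δ². -/
import Mathlib


/-! Basic notions for directed graphs given by an edge relation `E` on a vertex type `V`. -/

/-- Two vertices are adjacent if there is an edge between them in either direction. -/
def UndirAdj {V : Type*} (E : V → V → Prop) (a b : V) : Prop := E a b ∨ E b a

/-- `Descend E v w` means `w` is a descendant of `v`: it is reachable from `v`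
by a directed path of length at least 1. -/
def Descend {V : Type*} (E : V → V → Prop) (v w : V) : Prop := Relation.TransGen E v w

/-- A directed graph is a DAG iff its transitive closure is irreflexive. -/
def IsDAG {V : Type*} (E : V → V → Prop) : Prop := Irreflexive (Relation.TransGen E)

/-- `f 0, f 1, …, f m` is a path: the vertices are distinct and each consecutive
pair is adjacent (in either direction). -/
def IsPathOn {V : Type*} (E : V → V → Prop) (m : ℕ) (f : ℕ → V) : Prop :=
  (∀ i ≤ m, ∀ j ≤ m, f i = f j → i = j) ∧ ∀ i < m, UndirAdj E (f i) (f (i + 1))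

/-- The interior vertex `f i` is a collider on the path `f` if both of its
neighboring path edges point into it. -/
def IsCollider {V : Type*} (E : V → V → Prop) (f : ℕ → V) (i : ℕ) : Prop :=
  E (f (i - 1)) (f i) ∧ E (f (i + 1)) (f i)

/-- The path `f 0, …, f m` is active given the conditioning set `C`: every interior
non-collider is outside `C`, and every interior collider is in `C` or has a
descendant in `C`. -/
def ActivePath {V : Type*} (E : V → V → Prop) (C : Set V) (m : ℕ) (f : ℕ → V) : Prop :=
  IsPathOn E m f ∧ ∀ i, 0 < i → i < m →
    (¬ IsCollider E f i → f i ∉ C) ∧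
    (IsCollider E f i → f i ∈ C ∨ ∃ w ∈ C, Descend E (f i) w)

/-- `C` d-separates `X` and `Y`: no path from a vertex of `X` to a vertex of `Y`
is active given `C`. -/
def DSep {V : Type*} (E : V → V → Prop) (X Y C : Set V) : Prop :=
  ∀ (m : ℕ) (f : ℕ → V), f 0 ∈ X → f m ∈ Y → ¬ ActivePath E C m f

/-- The immoral descendants of `vi, vj`: their common children together with all
descendants of those common children. -/
def IMD {V : Type*} (E : V → V → Prop) (vi vj : V) : Set V :=
  {c | E vi c ∧ E vj c} ∪ {w | ∃ c, E vi c ∧ E vj c ∧ Descend E c w}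

/-- An independence preserving augmentation (IPA) of a nonadjacent pair `(vi, vj)`:
disjoint sets `Si, Sj ⊆ V \ {vi, vj}` such that for some conditioning set `C`
disjoint from `Si ∪ {vi} ∪ Sj ∪ {vj}`, the sets `Si ∪ {vi}` and `Sj ∪ {vj}`
are d-separated given `C`. -/
def IsIPA {V : Type*} (E : V → V → Prop) (vi vj : V) (Si Sj : Set V) : Prop :=
  Disjoint Si Sj ∧ vi ∉ Si ∧ vj ∉ Si ∧ vi ∉ Sj ∧ vj ∉ Sj ∧
  ∃ C : Set V, Disjoint C ((Si ∪ {vi}) ∪ (Sj ∪ {vj})) ∧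
    DSep E (Si ∪ {vi}) (Sj ∪ {vj}) C

section AuxSep

open Relation

variable {V : Type*} {E : V → V → Prop}

/-- Ancestors (inclusive) of a set. -/
def Anc (E : V → V → Prop) (A : Set V) : Set V := A ∪ {v | ∃ u ∈ A, Descend E v u}

lemma mem_anc {A : Set V} {v : V} :
    v ∈ Anc E A ↔ v ∈ A ∨ ∃ u ∈ A, Relation.TransGen E v u := Iff.rfl

lemma anc_closed {A : Set V} {a b : V} (h : E a b) (hb : b ∈ Anc E A) : a ∈ Anc E A := by
  rcases mem_anc.mp hb with h1 | ⟨u, hu, hdu⟩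
  · exact mem_anc.mpr (Or.inr ⟨b, h1, .single h⟩)
  · exact mem_anc.mpr (Or.inr ⟨u, hu, .head h hdu⟩)

lemma no2cycle (hdag : IsDAG E) {a b : V} (h1 : E a b) (h2 : E b a) : False :=
  hdag a (Relation.TransGen.head h1 (Relation.TransGen.single h2))

lemma edge_ne (hdag : IsDAG E) {a b : V} (h : E a b) : a ≠ b := by
  rintro rfl; exact hdag a (Relation.TransGen.single h)

lemma dsep_symm {X Y C : Set V} (h : DSep E X Y C) : DSep E Y X C := by
  intro m f hf0 hfm hact
  apply h m (fun t => f (m - t)) (by simpa using hfm) (by simpa using hf0)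
  obtain ⟨⟨hinj, hadj⟩, hcond⟩ := hact
  refine ⟨⟨?_, ?_⟩, ?_⟩
  · intro i hi j hj hij
    have := hinj (m - i) (by omega) (m - j) (by omega) hij
    omega
  · intro i hi
    have e : m - (i + 1) + 1 = m - i := by omega
    have h2 := hadj (m - (i + 1)) (by omega)
    rw [e] at h2
    exact h2.symm
  · intro i hi1 hi2
    have hcol : IsCollider E (fun t => f (m - t)) i ↔ IsCollider E f (m - i) := by
      unfold IsCollider
      have e1 : m - (i - 1) = (m - i) + 1 := by omega
      have e2 : m - (i + 1) = (m - i) - 1 := by omega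
      simp only [e1, e2]
      tauto
    have hmain := hcond (m - i) (by omega) (by omega)
    constructor
    · intro hnc
      exact hmain.1 (fun hc => hnc (hcol.mpr hc))
    · intro hc
      exact hmain.2 (hcol.mp hc)

lemma exists_chain {a b : V} (h : Relation.TransGen E a b) :
    ∃ k, ∃ g : ℕ → V, 0 < k ∧ g 0 = a ∧ g k = b ∧ ∀ t < k, E (g t) (g (t + 1)) := by
  induction h with
  | @single b h =>
      refine ⟨1, fun t => if t = 0 then a else b, one_pos, by simp, by simp, ?_⟩
      intro t ht
      interval_cases t
      simpa using h
  | @tail b c hab hbc ih =>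
      obtain ⟨k, g, hk, h0, hkb, hstep⟩ := ih
      refine ⟨k + 1, fun t => if t ≤ k then g t else c, by omega, by simp [h0], by simp, ?_⟩
      intro t ht
      rcases Nat.lt_or_ge t k with h | h
      · simp only [if_pos (by omega : t ≤ k), if_pos (by omega : t + 1 ≤ k)]
        exact hstep t h
      · have : t = k := by omega
        subst this
        simp only [if_pos le_rfl, if_neg (by omega : ¬ t + 1 ≤ t), hkb]
        exact hbc

lemma chain_transGen {g : ℕ → V} {k : ℕ} (hstep : ∀ t < k, E (g t) (g (t + 1))) :
    ∀ i j, i < j → j ≤ k → Relation.TransGen E (g i) (g j) := by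
  intro i j
  induction j with
  | zero => intro h _; exact absurd h (Nat.not_lt_zero i)
  | succ j ih =>
      intro hij hjk
      rcases Nat.lt_or_ge i j with h | h
      · exact (ih h (by omega)).tail (hstep j (by omega))
      · have : i = j := by omega
        subst this
        exact Relation.TransGen.single (hstep i (by omega))

lemma no_adj {X Y C : Set V} (hdag : IsDAG E) (hXY : Disjoint X Y) (hsep : DSep E X Y C)
    {x y : V} (hx : x ∈ X) (hy : y ∈ Y) (hadj : UndirAdj E x y) : False := by
  have hne : x ≠ y := fun h => Set.disjoint_left.mp hXY hx (h ▸ hy)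
  apply hsep 1 (fun t => if t = 0 then x else y) (by simpa using hx) (by simpa using hy)
  refine ⟨⟨?_, ?_⟩, ?_⟩
  · intro i hi j hj hij
    interval_cases i <;> interval_cases j <;> simp_all
  · intro i hi
    interval_cases i
    simpa using hadj
  · intro i h1 h2
    omega

/-- If `x ∈ X` has an edge into `c`, and `c` has a descendant in `Y`, then any
separating set for `X, Y` must contain `c` or a descendant of `c`. -/
lemma chain_forces {X Y C : Set V} (hdag : IsDAG E) (hsep : DSep E X Y C)
    {x c u : V} (hx : x ∈ X) (hxc : E x c) (hcu : Relation.TransGen E c u) (hu : u ∈ Y) :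
    ∃ z ∈ C, z = c ∨ Relation.TransGen E c z := by
  obtain ⟨k, g, hk, h0, hku, hstep⟩ := exists_chain hcu
  have hdesc_t : ∀ t, 0 < t → t ≤ k → Relation.TransGen E c (g t) := by
    intro t h1 h2
    have := chain_transGen hstep 0 t h1 h2
    rwa [h0] at this
  have hxg : ∀ t ≤ k, x ≠ g t := by
    intro t ht hxt
    rcases Nat.eq_zero_or_pos t with h | h
    · subst h
      rw [h0] at hxt
      exact edge_ne hdag hxc hxt
    · exact hdag x (Relation.TransGen.head hxc (hxt ▸ hdesc_t t h ht))
  have hginj : ∀ i ≤ k, ∀ j ≤ k, g i = g j → i = j := by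
    intro i hi j hj hij
    rcases lt_trichotomy i j with h | h | h
    · exact absurd (hij ▸ chain_transGen hstep i j h hj) (hdag _)
    · exact h
    · exact absurd (hij.symm ▸ chain_transGen hstep j i h hi) (hdag _)
  set f : ℕ → V := fun t => match t with
    | 0 => x
    | t + 1 => g t with hf
  have hf0 : f 0 = x := rfl
  have hfs : ∀ t, f (t + 1) = g t := fun t => rfl
  have hfm : f (k + 1) ∈ Y := by rw [hfs, hku]; exact hu
  have hpath : IsPathOn E (k + 1) f := by
    constructor
    · intro i hi j hj hij
      rcases i with _ | i <;> rcases j with _ | j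
      · rfl
      · exact absurd hij (hxg j (by omega))
      · exact absurd hij.symm (hxg i (by omega))
      · have := hginj i (by omega) j (by omega) hij
        omega
    · intro i hi
      rcases i with _ | i
      · rw [hf0, hfs, h0]
        exact Or.inl hxc
      · rw [hfs, hfs]
        exact Or.inl (hstep i (by omega))
  have hnocol : ∀ i, 0 < i → i < k + 1 → ¬ IsCollider E f i := by
    intro i h1 h2 hcol
    obtain ⟨j, rfl⟩ : ∃ j, i = j + 1 := ⟨i - 1, by omega⟩
    have hc2 : E (f (j + 1 + 1)) (f (j + 1)) := hcol.2
    rw [hfs, hfs] at hc2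
    exact no2cycle hdag (hstep j (by omega)) hc2
  have hev : ∃ i, 0 < i ∧ i < k + 1 ∧ f i ∈ C := by
    by_contra hcon
    push_neg at hcon
    exact hsep (k + 1) f (hf0 ▸ hx) hfm
      ⟨hpath, fun i hi1 hi2 => ⟨fun _ => hcon i hi1 hi2, fun hc => absurd hc (hnocol i hi1 hi2)⟩⟩
  obtain ⟨i, h1, h2, hiC⟩ := hev
  obtain ⟨j, rfl⟩ : ∃ j, i = j + 1 := ⟨i - 1, by omega⟩
  rw [hfs] at hiC
  refine ⟨g j, hiC, ?_⟩
  rcases Nat.eq_zero_or_pos j with h | h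
  · subst h
    exact Or.inl h0
  · exact Or.inr (hdesc_t j h (by omega))

/-- A common child of `x ∈ X` and `w ∈ Y` cannot be an ancestor of `X ∪ Y`
if `X` and `Y` are d-separable. -/
lemma spouse_absurd {X Y C : Set V} (hdag : IsDAG E) (hXY : Disjoint X Y)
    (hsep : DSep E X Y C) {x w c : V} (hx : x ∈ X) (hw : w ∈ Y)
    (hxc : E x c) (hwc : E w c) (hc : c ∈ Anc E (X ∪ Y)) : False := by
  have key : ∃ z ∈ C, z = c ∨ Relation.TransGen E c z := by
    rcases mem_anc.mp hc with hc' | ⟨u, hu, hdesc⟩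
    · rcases hc' with hcX | hcY
      · exact (no_adj hdag hXY hsep hcX hw (Or.inr hwc)).elim
      · exact (no_adj hdag hXY hsep hx hcY (Or.inl hxc)).elim
    · rcases hu with huX | huY
      · exact chain_forces hdag (dsep_symm hsep) hw hwc hdesc huX
      · exact chain_forces hdag hsep hx hxc hdesc huY
  obtain ⟨z, hzC, hz⟩ := key
  -- the path x → c ← w is then active given C
  set f : ℕ → V := fun t => match t with
    | 0 => x
    | 1 => c
    | _ => w with hf
  have e0 : f 0 = x := rfl
  have e1 : f 1 = c := rfl
  have e2 : f 2 = w := rfl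
  have hxw : x ≠ w := fun h => Set.disjoint_left.mp hXY hx (h ▸ hw)
  have hxc' : x ≠ c := edge_ne hdag hxc
  have hwc' : w ≠ c := edge_ne hdag hwc
  apply hsep 2 f (by rw [e0]; exact hx) (by rw [e2]; exact hw)
  have hcol : IsCollider E f 1 := ⟨by rw [e0, e1]; exact hxc, by rw [e2, e1]; exact hwc⟩
  refine ⟨⟨?_, ?_⟩, ?_⟩
  · intro i hi j hj hij
    interval_cases i <;> interval_cases j <;> simp only [e0, e1, e2] at hij <;>
      first
        | rfl
        | exact absurd hij hxc'
        | exact absurd hij.symm hxc'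
        | exact absurd hij hxw
        | exact absurd hij.symm hxw
        | exact absurd hij hwc'
        | exact absurd hij.symm hwc'
  · intro i hi
    interval_cases i
    · rw [e0, e1]; exact Or.inl hxc
    · rw [e1, e2]; exact Or.inr hwc
  · intro i hi1 hi2
    interval_cases i
    refine ⟨fun hnc => absurd hcol hnc, fun _ => ?_⟩
    rcases hz with rfl | hdz
    · exact Or.inl (by rw [e1]; exact hzC)
    · exact Or.inr ⟨z, hzC, by rw [e1]; exact hdz⟩

/-- On an active path, once the path leaves the set of ancestors of `X ∪ Y`
along a forward edge, it can never reach `Y`. -/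
lemma escape {X Y Z : Set V} (hdag : IsDAG E) {m : ℕ} {f : ℕ → V}
    (hZ : Z ⊆ Anc E (X ∪ Y)) (hfm : f m ∈ Y) (hact : ActivePath E Z m f) :
    ∀ d j, m - j = d → 0 < j → j ≤ m → E (f (j - 1)) (f j) → f j ∉ Anc E (X ∪ Y) → False := by
  intro d
  induction d with
  | zero =>
      intro j hd h0 hm _ hnot
      have hj : j = m := by omega
      exact hnot (mem_anc.mpr (Or.inl (Or.inr (hj ▸ hfm))))
  | succ d ih =>
      intro j hd h0 hjm hedge hnot
      have hjlt : j < m := by omega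
      obtain ⟨hpath, hcond⟩ := hact
      have hncol : ¬ IsCollider E f j := by
        intro hc
        rcases (hcond j h0 hjlt).2 hc with hin | ⟨w, hwZ, hdw⟩
        · exact hnot (hZ hin)
        · apply hnot
          rcases mem_anc.mp (hZ hwZ) with hw | ⟨u, hu, hdu⟩
          · exact mem_anc.mpr (Or.inr ⟨w, hw, hdw⟩)
          · exact mem_anc.mpr (Or.inr ⟨u, hu, hdw.trans hdu⟩)
      have hfwd : E (f j) (f (j + 1)) := by
        rcases hpath.2 j hjlt with h | h
        · exact h
        · exact absurd ⟨hedge, h⟩ hncol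
      have hnext : f (j + 1) ∉ Anc E (X ∪ Y) := by
        intro hmem
        exact hnot (anc_closed hfwd hmem)
      exact ih (j + 1) (by omega) (by omega) (by omega) (by simpa using hfwd) hnext

/-- The candidate small separating set: parents of `X`, children of `X` which are
ancestors of `X ∪ Y`, and co-parents via such children; minus `X ∪ Y` itself. -/
def Zset (E : V → V → Prop) (X Y : Set V) : Set V :=
  {v | v ∉ X ∧ v ∉ Y ∧ ((∃ x ∈ X, E v x) ∨ ((∃ x ∈ X, E x v) ∧ v ∈ Anc E (X ∪ Y)) ∨
    (∃ x ∈ X, ∃ c, E x c ∧ E v c ∧ c ∈ Anc E (X ∪ Y)))}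

lemma zset_subset_anc {X Y : Set V} : Zset E X Y ⊆ Anc E (X ∪ Y) := by
  rintro v ⟨hX, hY, h | ⟨_, han⟩ | ⟨x, hx, c, hxc, hvc, hcan⟩⟩
  · obtain ⟨x, hx, hvx⟩ := h
    exact mem_anc.mpr (Or.inr ⟨x, Or.inl hx, .single hvx⟩)
  · exact han
  · exact anc_closed hvc hcan

lemma zset_dsep {X Y : Set V} (hdag : IsDAG E) (hXY : Disjoint X Y)
    {C : Set V} (hsep : DSep E X Y C) : DSep E X Y (Zset E X Y) := by
  classical
  intro m f hf0 hfm hact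
  obtain ⟨i, hile, hiX, hnotX⟩ :
      ∃ i, i ≤ m ∧ f i ∈ X ∧ ∀ j, i < j → j ≤ m → f j ∉ X := by
    refine ⟨Nat.findGreatest (fun t => f t ∈ X) m, Nat.findGreatest_le m, ?_, ?_⟩
    · exact Nat.findGreatest_spec (P := fun t => f t ∈ X) (Nat.zero_le m) hf0
    · intro j h1 h2
      exact Nat.findGreatest_is_greatest (P := fun t => f t ∈ X) h1 h2
  have him : i < m := by
    rcases Nat.lt_or_ge i m with h | h
    · exact h
    · exfalso
      have : i = m := by omega
      exact Set.disjoint_left.mp hXY hiX (this ▸ hfm)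
  have hadj : UndirAdj E (f i) (f (i + 1)) := hact.1.2 i him
  have hvX : f (i + 1) ∉ X := hnotX (i + 1) (lt_add_one i) (by omega)
  have hvY : f (i + 1) ∉ Y := fun h => no_adj hdag hXY hsep hiX h hadj
  rcases hadj with hfwd | hback
  · -- forward edge out of X
    by_cases hvan : f (i + 1) ∈ Anc E (X ∪ Y)
    · have hvZ : f (i + 1) ∈ Zset E X Y :=
        ⟨hvX, hvY, Or.inr (Or.inl ⟨⟨f i, hiX, hfwd⟩, hvan⟩)⟩
      have him2 : i + 1 < m := by
        rcases Nat.lt_or_ge (i + 1) m with h | h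
        · exact h
        · exfalso
          have : i + 1 = m := by omega
          exact hvY (by rw [this]; exact hfm)
      by_cases hcol : IsCollider E f (i + 1)
      · have h2 : E (f (i + 1 + 1)) (f (i + 1)) := hcol.2
        have hwX : f (i + 2) ∉ X := hnotX (i + 2) (by omega) (by omega)
        have hwY : f (i + 2) ∉ Y := fun h =>
          spouse_absurd hdag hXY hsep hiX h hfwd h2 hvan
        have hwZ : f (i + 2) ∈ Zset E X Y :=
          ⟨hwX, hwY, Or.inr (Or.inr ⟨f i, hiX, f (i + 1), hfwd, h2, hvan⟩)⟩
        have him3 : i + 2 < m := by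
          rcases Nat.lt_or_ge (i + 2) m with h | h
          · exact h
          · exfalso
            have : i + 2 = m := by omega
            exact hwY (by rw [this]; exact hfm)
        have hncol2 : ¬ IsCollider E f (i + 2) := by
          intro hc
          exact no2cycle hdag hc.1 h2
        exact (hact.2 (i + 2) (by omega) him3).1 hncol2 hwZ
      · exact (hact.2 (i + 1) (by omega) him2).1 hcol hvZ
    · exact escape hdag zset_subset_anc hfm hact (m - (i + 1)) (i + 1) rfl (by omega)
        (by omega) (by simpa using hfwd) hvan
  · -- backward edge: f (i+1) is a parent of f i
    have hvZ : f (i + 1) ∈ Zset E X Y := ⟨hvX, hvY, Or.inl ⟨f i, hiX, hback⟩⟩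
    have him2 : i + 1 < m := by
      rcases Nat.lt_or_ge (i + 1) m with h | h
      · exact h
      · exfalso
        have : i + 1 = m := by omega
        exact hvY (by rw [this]; exact hfm)
    have hncol : ¬ IsCollider E f (i + 1) := by
      intro hc
      exact no2cycle hdag hc.1 hback
    exact (hact.2 (i + 1) (by omega) him2).1 hncol hvZ

lemma zset_card [Fintype V] {Δ : ℕ}
    (hdeg : ∀ v : V, ({w | E w v}.ncard + {w | E v w}.ncard) ≤ Δ)
    (X Y : Set V) : (Zset E X Y).ncard ≤ X.ncard * Δ ^ 2 := by
  classical
  set B : V → Set V := fun x =>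
    ({w | E w x} ∪ {w | E x w}) ∪ ⋃ c ∈ {w | E x w}, ({w | E w c} \ {x}) with hB
  have hBsub : Zset E X Y ⊆ ↑(X.toFinset.biUnion fun x => (B x).toFinset) := by
    rintro v ⟨hvX, hvY, h | ⟨⟨x, hx, hxv⟩, _⟩ | ⟨x, hx, c, hxc, hvc, _⟩⟩
    · obtain ⟨x, hx, hvx⟩ := h
      simp only [Finset.coe_biUnion, Set.coe_toFinset, Set.mem_iUnion]
      exact ⟨x, hx, Or.inl (Or.inl hvx)⟩
    · simp only [Finset.coe_biUnion, Set.coe_toFinset, Set.mem_iUnion]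
      exact ⟨x, hx, Or.inl (Or.inr hxv)⟩
    · simp only [Finset.coe_biUnion, Set.coe_toFinset, Set.mem_iUnion]
      refine ⟨x, hx, Or.inr ?_⟩
      simp only [Set.mem_iUnion]
      exact ⟨c, hxc, hvc, fun hveq => hvX (hveq ▸ hx)⟩
  have hBcard : ∀ x : V, (B x).ncard ≤ Δ ^ 2 := by
    intro x
    have hpq : {w | E w x}.ncard + {w | E x w}.ncard ≤ Δ := hdeg x
    have h1 : (B x).ncard ≤ ({w | E w x} ∪ {w | E x w}).ncard +
        (⋃ c ∈ {w | E x w}, ({w | E w c} \ {x})).ncard := Set.ncard_union_le _ _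
    have h2 : ({w | E w x} ∪ {w | E x w}).ncard ≤
        {w | E w x}.ncard + {w | E x w}.ncard := Set.ncard_union_le _ _
    have h3 : (⋃ c ∈ {w | E x w}, ({w | E w c} \ {x})).ncard ≤
        {w | E x w}.ncard * (Δ - 1) := by
      have heq : (⋃ c ∈ {w | E x w}, ({w | E w c} \ {x})) =
          ↑({w | E x w}.toFinset.biUnion fun c => ({w | E w c} \ {x}).toFinset) := by
        ext v
        simp [Set.mem_iUnion]
      rw [heq, Set.ncard_coe_finset]
      calc ({w | E x w}.toFinset.biUnion fun c => ({w | E w c} \ {x}).toFinset).card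
          ≤ ∑ c ∈ {w | E x w}.toFinset, ({w | E w c} \ {x}).toFinset.card :=
            Finset.card_biUnion_le
        _ ≤ {w | E x w}.toFinset.card * (Δ - 1) := by
            rw [← smul_eq_mul]
            apply Finset.sum_le_card_nsmul
            intro c hc
            have hxc : E x c := by simpa using hc
            have hxin : x ∈ {w | E w c} := hxc
            have hd : ({w | E w c} \ {x}).ncard = {w | E w c}.ncard - 1 :=
              Set.ncard_diff_singleton_of_mem hxin
            have hle : {w | E w c}.ncard ≤ Δ := le_trans (Nat.le_add_right _ _) (hdeg c)
            have : ({w | E w c} \ {x}).toFinset.card = ({w | E w c} \ {x}).ncard := by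
              rw [Set.ncard_eq_toFinset_card']
            rw [this, hd]
            omega
        _ = {w | E x w}.ncard * (Δ - 1) := by rw [Set.ncard_eq_toFinset_card']
    set p := {w | E w x}.ncard
    set q := {w | E x w}.ncard
    have : (B x).ncard ≤ p + q + q * (Δ - 1) := by omega
    refine le_trans this ?_
    rcases Nat.eq_zero_or_pos Δ with hΔ | hΔ
    · subst hΔ
      have : p = 0 ∧ q = 0 := by omega
      simp [this.1, this.2]
    · obtain ⟨n, rfl⟩ : ∃ n, Δ = n + 1 := ⟨Δ - 1, by omega⟩
      have e : n + 1 - 1 = n := rfl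
      rw [e]
      have hqn : q * n ≤ (p + q) * n := Nat.mul_le_mul_right n (by omega)
      calc p + q + q * n ≤ (p + q) + (p + q) * n := by omega
        _ = (p + q) * (n + 1) := by ring
        _ ≤ (n + 1) * (n + 1) := Nat.mul_le_mul hpq le_rfl
        _ = (n + 1) ^ 2 := (sq (n + 1)).symm
  calc (Zset E X Y).ncard ≤ (↑(X.toFinset.biUnion fun x => (B x).toFinset) : Set V).ncard :=
        Set.ncard_le_ncard hBsub (Set.toFinite _)
    _ = (X.toFinset.biUnion fun x => (B x).toFinset).card := Set.ncard_coe_finset _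
    _ ≤ ∑ x ∈ X.toFinset, (B x).toFinset.card := Finset.card_biUnion_le
    _ ≤ X.toFinset.card * (Δ ^ 2) := by
        rw [← smul_eq_mul]
        apply Finset.sum_le_card_nsmul
        intro x _
        rw [show (B x).toFinset.card = (B x).ncard from (Set.ncard_eq_toFinset_card' _).symm]
        exact hBcard x
    _ = X.ncard * Δ ^ 2 := by rw [Set.ncard_eq_toFinset_card']

lemma zset_disjoint {X Y : Set V} : Disjoint (Zset E X Y) (X ∪ Y) := by
  rw [Set.disjoint_left]
  rintro v ⟨hvX, hvY, _⟩ (h | h)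
  · exact hvX h
  · exact hvY h

end AuxSep

/-- Lemma: separating-set size bound.
In a finite DAG of maximum degree `Δ`, if disjoint sets `S, S'` admit some
separating set `C ⊆ V \ (S ∪ S')`, then they admit one of size at most
`min(|S|, |S'|) · Δ²`. -/
theorem stmt_7 {V : Type*} [Fintype V] (E : V → V → Prop) (Δ : ℕ)
    (hdag : IsDAG E)
    (hdeg : ∀ v : V, ({w | E w v}.ncard + {w | E v w}.ncard) ≤ Δ)
    (S S' : Set V) (hdisj : Disjoint S S')
    (hex : ∃ C : Set V, Disjoint C (S ∪ S') ∧ DSep E S S' C) :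
    ∃ C' : Set V, Disjoint C' (S ∪ S') ∧ DSep E S S' C' ∧
      C'.ncard ≤ min S.ncard S'.ncard * Δ ^ 2 := by
  obtain ⟨C, _, hsep⟩ := hex
  rcases le_total S.ncard S'.ncard with hle | hle
  · refine ⟨Zset E S S', zset_disjoint, zset_dsep hdag hdisj hsep, ?_⟩
    rw [min_eq_left hle]
    exact zset_card hdeg S S'
  · have hsep' := dsep_symm hsep
    refine ⟨Zset E S' S, ?_, dsep_symm (zset_dsep hdag hdisj.symm hsep'), ?_⟩
    · rw [Set.union_comm]
      exact zset_disjoint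
    · rw [min_eq_right hle]
      exact zset_card hdeg S' S
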